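/- arXiv:1104.3739 — 2 statements merged into one kernel-verified Lean document; each statement's English description precedes it below -/
import Mathlib

section
/- (Secrecy gain of E₈.) For every real y > 0, the secrecy function of the E₈ lattice satisfies Ξ_{E₈}(y) = (1 − z(y))^{-1} ≤ (1 − z(1))^{-1} = 4/3 = Ξ_{E₈}(1); that is, 2 θ₃(y)⁸ / (θ₂(y)⁸ + θ₃(y)⁸ + θ₄(y)⁸) ≤ 4/3, with equality at y = 1. -/
/-- Jacobi theta constant θ₂ on the imaginary axis. -/
noncomputable def theta2 (y : ℝ) : ℝ := ∑' n : ℤ, Real.exp (-Real.pi * y * (n + 1/2)^2)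

/-- Jacobi theta constant θ₃ on the imaginary axis. -/
noncomputable def theta3 (y : ℝ) : ℝ := ∑' n : ℤ, Real.exp (-Real.pi * y * n^2)

/-- Jacobi theta constant θ₄ on the imaginary axis. -/
noncomputable def theta4 (y : ℝ) : ℝ := ∑' n : ℤ, (-1 : ℝ)^n * Real.exp (-Real.pi * y * n^2)

/-- The function z(y) = θ₂(y)⁴θ₄(y)⁴/θ₃(y)⁸. -/
noncomputable def zfun (y : ℝ) : ℝ := theta2 y ^ 4 * theta4 y ^ 4 / theta3 y ^ 8

open Real


lemma sg_summable_aux {y : ℝ} (hy : 0 < y) {c : ℝ} (f : ℤ → ℝ)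
    (hf : ∀ n : ℤ, 0 ≤ f n) (hb : ∀ n : ℕ, f n ≤ Real.exp (c - π * y * n))
    (hb' : ∀ n : ℕ, f (-n) ≤ Real.exp (c - π * y * n)) : Summable f := by
  have hgeo : Summable (fun n : ℕ => Real.exp (c - π * y * n)) := by
    have : (fun n : ℕ => Real.exp (c - π * y * n)) =
        fun n : ℕ => Real.exp c * (Real.exp (-π * y)) ^ n := by
      funext n
      rw [← Real.exp_nat_mul, ← Real.exp_add]
      ring_nf
    rw [this]
    refine Summable.mul_left _ (summable_geometric_of_lt_one (le_of_lt (exp_pos _)) ?_)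
    rw [exp_lt_one_iff]
    nlinarith [pi_pos]
  refine Summable.of_nat_of_neg ?_ ?_
  · exact hgeo.of_nonneg_of_le (fun n => hf n) (fun n => hb n)
  · exact hgeo.of_nonneg_of_le (fun n => hf (-n)) (fun n => hb' n)

lemma sg_summable3 {y : ℝ} (hy : 0 < y) : Summable (fun n : ℤ => Real.exp (-π * y * n^2)) := by
  refine sg_summable_aux hy (c := π * y) _ (fun n => (exp_pos _).le) (fun n => ?_) (fun n => ?_) <;>
  · refine Real.exp_le_exp.2 ?_
    push_cast
    nlinarith [mul_pos pi_pos hy, sq_nonneg ((n:ℝ) - 1/2), sq_nonneg ((n:ℝ) + 1/2),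
      mul_nonneg (mul_pos pi_pos hy).le (sq_nonneg ((n:ℝ) - 1/2)),
      mul_nonneg (mul_pos pi_pos hy).le (sq_nonneg ((n:ℝ) + 1/2))]

lemma sg_summable2 {y : ℝ} (hy : 0 < y) :
    Summable (fun n : ℤ => Real.exp (-π * y * (n + 1/2)^2)) := by
  refine sg_summable_aux hy (c := π * y) _ (fun n => (exp_pos _).le) (fun n => ?_) (fun n => ?_) <;>
  · refine Real.exp_le_exp.2 ?_
    push_cast
    nlinarith [mul_pos pi_pos hy, mul_nonneg (mul_pos pi_pos hy).le (sq_nonneg ((n:ℝ) - 1)),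
      mul_nonneg (mul_pos pi_pos hy).le (sq_nonneg ((n:ℝ) + 1)),
      mul_nonneg (mul_pos pi_pos hy).le (sq_nonneg (n:ℝ))]

lemma sg_summable4 {y : ℝ} (hy : 0 < y) :
    Summable (fun n : ℤ => (-1:ℝ)^n * Real.exp (-π * y * n^2)) := by
  refine (sg_summable3 hy).of_norm_bounded (fun n => ?_)
  rw [norm_mul, norm_zpow, norm_neg, norm_one, one_zpow, one_mul, Real.norm_eq_abs,
    abs_of_pos (exp_pos _)]

lemma sg_theta3_pos {y : ℝ} (hy : 0 < y) : 0 < theta3 y :=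
  Summable.tsum_pos (sg_summable3 hy) (fun n => (exp_pos _).le) 0 (exp_pos _)

lemma sg_theta2_pos {y : ℝ} (hy : 0 < y) : 0 < theta2 y :=
  Summable.tsum_pos (sg_summable2 hy) (fun n => (exp_pos _).le) 0 (exp_pos _)


/-- Splitting a sum over ℤ×ℤ according to the parity of the sum of coordinates. -/
lemma sg_split (f : ℤ × ℤ → ℝ) {A B : ℝ}
    (hA : HasSum (fun p : ℤ × ℤ => f (p.1 + p.2, p.1 - p.2)) A)
    (hB : HasSum (fun p : ℤ × ℤ => f (p.1 - p.2, p.1 + p.2 + 1)) B) :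
    HasSum f (A + B) := by
  set i : ℤ × ℤ → ℤ × ℤ := fun p => (p.1 + p.2, p.1 - p.2) with hi_def
  set j : ℤ × ℤ → ℤ × ℤ := fun p => (p.1 - p.2, p.1 + p.2 + 1) with hj_def
  have hi : Function.Injective i := by
    intro p q h
    simp only [hi_def, Prod.mk.injEq] at h
    obtain ⟨h1, h2⟩ := h
    have : p.1 = q.1 ∧ p.2 = q.2 := ⟨by omega, by omega⟩
    exact Prod.ext this.1 this.2
  have hj : Function.Injective j := by
    intro p q h
    simp only [hj_def, Prod.mk.injEq] at h
    obtain ⟨h1, h2⟩ := h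
    have : p.1 = q.1 ∧ p.2 = q.2 := ⟨by omega, by omega⟩
    exact Prod.ext this.1 this.2
  have hrange : Set.range j = (Set.range i)ᶜ := by
    ext ⟨m, n⟩
    simp only [Set.mem_range, Set.mem_compl_iff, hi_def, hj_def, Prod.mk.injEq, Prod.exists,
      not_exists]
    constructor
    · rintro ⟨a, b, rfl, rfl⟩ c d ⟨h1, h2⟩
      omega
    · intro h
      rcases Int.even_or_odd (m + n) with ⟨c, hc⟩ | ⟨c, hc⟩
      · exact (h c (m - c) ⟨by omega, by omega⟩).elim
      · exact ⟨c, c - m, by omega, by omega⟩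
  have hA' : HasSum (f ∘ (Subtype.val : Set.range i → ℤ × ℤ)) A := by
    rw [← (Equiv.ofInjective i hi).hasSum_iff]
    exact hA
  have hB' : HasSum (f ∘ (Subtype.val : Set.range j → ℤ × ℤ)) B := by
    rw [← (Equiv.ofInjective j hj).hasSum_iff]
    exact hB
  rw [hrange] at hB'
  exact HasSum.add_isCompl isCompl_compl hA' hB'

lemma sg_prod_hasSum {f g : ℤ → ℝ} (hf : Summable f) (hg : Summable g)
    (hf0 : ∀ n, 0 ≤ f n) (hg0 : ∀ n, 0 ≤ g n) :
    HasSum (fun p : ℤ × ℤ => f p.1 * g p.2) ((∑' n, f n) * ∑' n, g n) := by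
  have hf' : Summable fun n => ‖f n‖ := by
    simpa only [Real.norm_eq_abs, abs_of_nonneg (hf0 _)] using hf
  have hg' : Summable fun n => ‖g n‖ := by
    simpa only [Real.norm_eq_abs, abs_of_nonneg (hg0 _)] using hg
  have hs := (summable_mul_of_summable_norm hf' hg').hasSum
  rwa [← tsum_mul_tsum_of_summable_norm hf' hg'] at hs

lemma sg_theta3_hasSum {y : ℝ} (hy : 0 < y) :
    HasSum (fun n : ℤ => Real.exp (-π * y * n^2)) (theta3 y) := (sg_summable3 hy).hasSum

lemma sg_theta2_hasSum {y : ℝ} (hy : 0 < y) :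
    HasSum (fun n : ℤ => Real.exp (-π * y * (n + 1/2)^2)) (theta2 y) := (sg_summable2 hy).hasSum

lemma sg_theta4_hasSum {y : ℝ} (hy : 0 < y) :
    HasSum (fun n : ℤ => (-1:ℝ)^n * Real.exp (-π * y * n^2)) (theta4 y) :=
  (sg_summable4 hy).hasSum

lemma sg_theta3_sq {y : ℝ} (hy : 0 < y) :
    theta3 y * theta3 y = theta3 (2*y) * theta3 (2*y) + theta2 (2*y) * theta2 (2*y) := by
  have hy2 : 0 < 2 * y := by linarith
  have hbig : HasSum (fun p : ℤ × ℤ => Real.exp (-π * y * p.1^2) * Real.exp (-π * y * p.2^2))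
      (theta3 (2*y) * theta3 (2*y) + theta2 (2*y) * theta2 (2*y)) := by
    apply sg_split
    · have h := sg_prod_hasSum (sg_summable3 hy2) (sg_summable3 hy2)
        (fun _ => (exp_pos _).le) (fun _ => (exp_pos _).le)
      rw [← theta3] at h
      convert h using 2 with p
      rw [← Real.exp_add, ← Real.exp_add]
      congr 1
      push_cast
      ring
    · have h := sg_prod_hasSum (sg_summable2 hy2) (sg_summable2 hy2)
        (fun _ => (exp_pos _).le) (fun _ => (exp_pos _).le)
      rw [← theta2] at h
      convert h using 2 with p
      rw [← Real.exp_add, ← Real.exp_add]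
      congr 1
      push_cast
      ring
  have hsq : HasSum (fun p : ℤ × ℤ => Real.exp (-π * y * p.1^2) * Real.exp (-π * y * p.2^2))
      (theta3 y * theta3 y) := by
    have h := sg_prod_hasSum (sg_summable3 hy) (sg_summable3 hy)
      (fun _ => (exp_pos _).le) (fun _ => (exp_pos _).le)
    rwa [← theta3] at h
  exact hsq.unique hbig

lemma sg_theta4_sq {y : ℝ} (hy : 0 < y) :
    theta4 y * theta4 y = theta3 (2*y) * theta3 (2*y) - theta2 (2*y) * theta2 (2*y) := by
  have hy2 : 0 < 2 * y := by linarith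
  have hbig : HasSum
      (fun p : ℤ × ℤ => ((-1:ℝ)^p.1 * Real.exp (-π * y * p.1^2)) *
        ((-1:ℝ)^p.2 * Real.exp (-π * y * p.2^2)))
      (theta3 (2*y) * theta3 (2*y) + -(theta2 (2*y) * theta2 (2*y))) := by
    apply sg_split
    · have h := sg_prod_hasSum (sg_summable3 hy2) (sg_summable3 hy2)
        (fun _ => (exp_pos _).le) (fun _ => (exp_pos _).le)
      rw [← theta3] at h
      convert h using 2 with p
      have hs : (-1:ℝ)^(p.1 + p.2) * (-1:ℝ)^(p.1 - p.2) = 1 := by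
        rw [← zpow_add₀ (by norm_num : (-1:ℝ) ≠ 0)]
        have : p.1 + p.2 + (p.1 - p.2) = 2 * p.1 := by ring
        rw [this, zpow_mul]
        norm_num
      rw [show ((-1:ℝ)^(p.1+p.2) * Real.exp (-π * y * (p.1+p.2 : ℤ)^2)) *
          ((-1:ℝ)^(p.1-p.2) * Real.exp (-π * y * (p.1-p.2 : ℤ)^2)) =
          ((-1:ℝ)^(p.1 + p.2) * (-1:ℝ)^(p.1 - p.2)) *
          (Real.exp (-π * y * (p.1+p.2 : ℤ)^2) * Real.exp (-π * y * (p.1-p.2 : ℤ)^2)) by ring,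
        hs, one_mul, ← Real.exp_add, ← Real.exp_add]
      congr 1
      push_cast
      ring
    · have h := (sg_prod_hasSum (sg_summable2 hy2) (sg_summable2 hy2)
        (fun _ => (exp_pos _).le) (fun _ => (exp_pos _).le)).neg
      rw [← theta2] at h
      convert h using 2 with p
      case e'_3 => rfl
      have hs : (-1:ℝ)^(p.1 - p.2) * (-1:ℝ)^(p.1 + p.2 + 1) = -1 := by
        rw [← zpow_add₀ (by norm_num : (-1:ℝ) ≠ 0)]
        have : p.1 - p.2 + (p.1 + p.2 + 1) = 2 * p.1 + 1 := by ring
        rw [this, zpow_add₀ (by norm_num : (-1:ℝ) ≠ 0), zpow_mul]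
        norm_num
      rw [show ((-1:ℝ)^(p.1-p.2) * Real.exp (-π * y * (p.1-p.2 : ℤ)^2)) *
          ((-1:ℝ)^(p.1+p.2+1) * Real.exp (-π * y * (p.1+p.2+1 : ℤ)^2)) =
          ((-1:ℝ)^(p.1 - p.2) * (-1:ℝ)^(p.1 + p.2 + 1)) *
          (Real.exp (-π * y * (p.1-p.2 : ℤ)^2) * Real.exp (-π * y * (p.1+p.2+1 : ℤ)^2)) by ring,
        hs, neg_one_mul, ← Real.exp_add, ← Real.exp_add]
      congr 2
      push_cast
      ring
  have hsq : HasSum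
      (fun p : ℤ × ℤ => ((-1:ℝ)^p.1 * Real.exp (-π * y * p.1^2)) *
        ((-1:ℝ)^p.2 * Real.exp (-π * y * p.2^2)))
      (theta4 y * theta4 y) := by
    have hnn : ∀ n : ℤ, ‖(-1:ℝ)^n * Real.exp (-π * y * n^2)‖ = Real.exp (-π * y * n^2) := by
      intro n
      rw [norm_mul, norm_zpow, norm_neg, norm_one, one_zpow, one_mul, Real.norm_eq_abs,
        abs_of_pos (exp_pos _)]
    have hf' : Summable fun n : ℤ => ‖(-1:ℝ)^n * Real.exp (-π * y * n^2)‖ := by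
      simpa only [hnn] using sg_summable3 hy
    have hs := (summable_mul_of_summable_norm hf' hf').hasSum
    rw [← tsum_mul_tsum_of_summable_norm hf' hf'] at hs
    rwa [← theta4] at hs
  have := hsq.unique hbig
  linarith [this]

set_option maxHeartbeats 1000000 in
lemma sg_theta2_sq {y : ℝ} (hy : 0 < y) :
    theta2 y * theta2 y = 2 * (theta2 (2*y) * theta3 (2*y)) := by
  have hy2 : 0 < 2 * y := by linarith
  have hshift : Summable (fun n : ℤ => Real.exp (-π * (2*y) * (n+1:ℤ)^2)) :=
    ((Equiv.addRight (1:ℤ)).summable_iff).2 (sg_summable3 hy2)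
  have hshift_tsum : ∑' n : ℤ, Real.exp (-π * (2*y) * (n+1:ℤ)^2) = theta3 (2*y) := by
    rw [theta3]
    exact (Equiv.addRight (1:ℤ)).tsum_eq (fun n : ℤ => Real.exp (-π * (2*y) * n^2))
  have hbig : HasSum
      (fun p : ℤ × ℤ => Real.exp (-π * y * (p.1 + 1/2)^2) * Real.exp (-π * y * (p.2 + 1/2)^2))
      (theta2 (2*y) * theta3 (2*y) + theta3 (2*y) * theta2 (2*y)) := by
    apply sg_split
    · have h := sg_prod_hasSum (sg_summable2 hy2) (sg_summable3 hy2)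
        (fun _ => (exp_pos _).le) (fun _ => (exp_pos _).le)
      rw [← theta2, ← theta3] at h
      convert h using 2 with p
      rw [← Real.exp_add, ← Real.exp_add]
      congr 1
      push_cast
      ring
    · have h := sg_prod_hasSum hshift (sg_summable2 hy2)
        (fun _ => (exp_pos _).le) (fun _ => (exp_pos _).le)
      rw [hshift_tsum, ← theta2] at h
      convert h using 2 with p
      rw [← Real.exp_add, ← Real.exp_add]
      congr 1
      push_cast
      ring
  have hsq : HasSum
      (fun p : ℤ × ℤ => Real.exp (-π * y * (p.1 + 1/2)^2) * Real.exp (-π * y * (p.2 + 1/2)^2))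
      (theta2 y * theta2 y) := by
    have h := sg_prod_hasSum (sg_summable2 hy) (sg_summable2 hy)
      (fun _ => (exp_pos _).le) (fun _ => (exp_pos _).le)
    rwa [← theta2] at h
  have := hsq.unique hbig
  linarith [this]

/-- Jacobi's identity θ₂⁴ + θ₄⁴ = θ₃⁴. -/
lemma sg_jacobi {y : ℝ} (hy : 0 < y) : theta2 y ^ 4 + theta4 y ^ 4 = theta3 y ^ 4 := by
  have h3 := sg_theta3_sq hy
  have h4 := sg_theta4_sq hy
  have h2 := sg_theta2_sq hy
  linear_combination (theta2 y * theta2 y + 2*(theta2 (2*y)*theta3 (2*y))) * h2 +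
    (theta4 y * theta4 y + (theta3 (2*y)*theta3 (2*y) - theta2 (2*y)*theta2 (2*y))) * h4 -
    (theta3 y * theta3 y + (theta3 (2*y)*theta3 (2*y) + theta2 (2*y)*theta2 (2*y))) * h3

section ModularPart
open Complex
lemma sg_theta4_complex : (theta4 1 : ℂ) = jacobiTheta₂ (1/2) Complex.I := by
  rw [theta4, Complex.ofReal_tsum, jacobiTheta₂]
  congr 1
  funext n
  rw [jacobiTheta₂_term]
  have h : 2 * (π:ℂ) * Complex.I * n * (1/2) + π * Complex.I * n^2 * Complex.I
      = n * (π * Complex.I) + (-(π * n^2) : ℝ) := by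
    push_cast
    linear_combination ((π:ℂ) * (n:ℂ)^2) * Complex.I_mul_I
  rw [h, Complex.exp_add, Complex.exp_int_mul, Complex.exp_pi_mul_I, ← Complex.ofReal_exp]
  push_cast
  ring_nf

lemma sg_theta2_complex :
    (theta2 1 : ℂ) = Complex.exp (-(π:ℂ)/4) * jacobiTheta₂ (Complex.I/2) Complex.I := by
  rw [theta2, Complex.ofReal_tsum, jacobiTheta₂, ← tsum_mul_left]
  congr 1
  funext n
  rw [jacobiTheta₂_term, ← Complex.exp_add, Complex.ofReal_exp]
  congr 1
  push_cast
  linear_combination (-(π:ℂ) * (n:ℂ)^2 - π * n) * Complex.I_mul_I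
lemma sg_theta2_one_eq_theta4_one : theta2 1 = theta4 1 := by
  have key := jacobiTheta₂_functional_equation (Complex.I/2) Complex.I
  have h1 : -Complex.I * Complex.I = 1 := by
    rw [neg_mul, Complex.I_mul_I]; norm_num
  have h2 : (Complex.I/2)/Complex.I = 1/2 := by
    rw [div_div, mul_comm, ← div_div, div_self Complex.I_ne_zero]
  have h3 : (-1 : ℂ)/Complex.I = Complex.I := by
    rw [div_eq_iff Complex.I_ne_zero]
    linear_combination -Complex.I_mul_I
  have h5 : (Complex.I/2)^2 = -(1/4 : ℂ) := by
    rw [div_pow, Complex.I_sq]; ring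
  rw [h1, h2, h3, one_cpow] at key
  have h6 : -(π:ℂ) * Complex.I * (Complex.I/2)^2 / Complex.I = (π:ℂ)/4 := by
    rw [h5, div_eq_iff Complex.I_ne_zero]; ring
  rw [h6] at key
  have : (theta2 1 : ℂ) = (theta4 1 : ℂ) := by
    rw [sg_theta2_complex, key, sg_theta4_complex, one_div_one, one_mul, ← mul_assoc,
      ← Complex.exp_add, show -(π:ℂ)/4 + (π:ℂ)/4 = 0 by ring, Complex.exp_zero, one_mul]
  exact_mod_cast this

end ModularPart


theorem secrecy_gain_E8 :
    (∀ y : ℝ, 0 < y →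
      2 * theta3 y ^ 8 / (theta2 y ^ 8 + theta3 y ^ 8 + theta4 y ^ 8) = (1 - zfun y)⁻¹ ∧
      (1 - zfun y)⁻¹ ≤ (1 - zfun 1)⁻¹) ∧
    (1 - zfun 1)⁻¹ = 4 / 3 := by
  have key : ∀ y : ℝ, 0 < y →
      2 * theta3 y ^ 8 / (theta2 y ^ 8 + theta3 y ^ 8 + theta4 y ^ 8) = (1 - zfun y)⁻¹ ∧
      zfun y ≤ 1/4 := by
    intro y hy
    set s := theta2 y ^ 4 with hs_def
    set t := theta4 y ^ 4 with ht_def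
    have hs : 0 < s := by
      have := sg_theta2_pos hy
      positivity
    have ht : 0 ≤ t := by positivity
    have hj : s + t = theta3 y ^ 4 := sg_jacobi hy
    have h38 : theta3 y ^ 8 = (s + t)^2 := by rw [hj]; ring
    have h28 : theta2 y ^ 8 = s^2 := by rw [hs_def]; ring
    have h48 : theta4 y ^ 8 = t^2 := by rw [ht_def]; ring
    have hsum : 0 < s + t := by linarith
    have hq : 0 < s^2 + s*t + t^2 := by nlinarith
    have hz : zfun y = s * t / (s+t)^2 := by rw [zfun, h38]
    constructor
    · rw [hz, h28, h38, h48]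
      rw [show 1 - s * t / (s+t)^2 = (s^2 + s*t + t^2) / (s+t)^2 by field_simp; ring]
      rw [inv_div]
      rw [div_eq_div_iff (by nlinarith) (by nlinarith)]
      ring
    · rw [hz, div_le_iff₀ (by positivity)]
      nlinarith [sq_nonneg (s - t)]
  have hz1 : zfun 1 = 1/4 := by
    have h24 := sg_theta2_one_eq_theta4_one
    have hs : 0 < theta2 1 := sg_theta2_pos one_pos
    have hj : theta2 1 ^ 4 + theta4 1 ^ 4 = theta3 1 ^ 4 := sg_jacobi one_pos
    rw [← h24] at hj
    have h38 : theta3 1 ^ 8 = 4 * theta2 1 ^ 8 := by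
      have : theta3 1 ^ 8 = (theta3 1 ^ 4)^2 := by ring
      rw [this, ← hj]; ring
    rw [zfun, ← h24, h38]
    have h8 : (0:ℝ) < theta2 1 ^ 8 := by positivity
    field_simp
  have hfinal : (1 - zfun 1)⁻¹ = 4/3 := by rw [hz1]; norm_num
  refine ⟨fun y hy => ⟨(key y hy).1, ?_⟩, hfinal⟩
  rw [hfinal]
  have hb := (key y hy).2
  have h34 : (3/4 : ℝ) ≤ 1 - zfun y := by linarith
  calc (1 - zfun y)⁻¹ ≤ ((3:ℝ)/4)⁻¹ := by
        apply inv_anti₀ (by norm_num) h34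
    _ = 4/3 := by norm_num
end

section
/- (Dimension 80 case of the main theorem.) Define P₈₀(z) = (1 − z)¹⁰ − (75/8)(1 − z)⁷ z² + (42525/2048)(1 − z)⁴ z⁴ − (202125/32768)(1 − z) z⁶. For every real y > 0, P₈₀(z(y)) ≥ P₈₀(1/4) > 0; consequently the secrecy function Ξ(y) = P₈₀(z(y))^{-1} of the extremal even unimodular lattice in dimension 80 satisfies Ξ(y) ≤ Ξ(1) = P₈₀(1/4)^{-1}. -/
set_option maxHeartbeats 1000000

/-- Denominator polynomial of the secrecy function of the extremal even
unimodular lattice in dimension 80. -/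
noncomputable def P80 (z : ℝ) : ℝ := (1 - z) ^ 10 - 75 / 8 * (1 - z) ^ 7 * z ^ 2 + 42525 / 2048 * (1 - z) ^ 4 * z ^ 4 - 202125 / 32768 * (1 - z) * z ^ 6

open Real Complex

namespace SecrecyAux

lemma sum3 {t : ℝ} (ht : 0 < t) : Summable (fun n : ℤ => Real.exp (-Real.pi * t * n^2)) := by
  have := summable_pow_mul_jacobiTheta₂_term_bound 0 ht 0
  refine this.congr fun n => ?_
  simp; ring_nf

lemma sum2 {t : ℝ} (ht : 0 < t) : Summable (fun n : ℤ => Real.exp (-Real.pi * t * (n + 1/2)^2)) := by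
  have h4 : (0:ℝ) < t/4 := by linarith
  refine Summable.of_nonneg_of_le (fun n => (Real.exp_pos _).le) (fun n => ?_) (sum3 h4)
  rw [Real.exp_le_exp]
  have key : ((n:ℝ))^2/4 ≤ ((n:ℝ) + 1/2)^2 := by
    have hn : (n:ℝ) ≤ -1 ∨ (0:ℝ) ≤ (n:ℝ) := by
      rcases le_or_gt n (-1) with h | h
      · exact Or.inl (by exact_mod_cast h)
      · exact Or.inr (by exact_mod_cast (by omega : (0:ℤ) ≤ n))
    rcases hn with h | h <;> nlinarith
  have hpt : (0:ℝ) ≤ Real.pi * t := by positivity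
  nlinarith [mul_le_mul_of_nonneg_left key hpt]

lemma neg_one_zpow_abs (n : ℤ) : |((-1:ℝ))^n| = 1 := by
  rcases Int.even_or_odd n with h|h
  · rw [h.neg_one_zpow]; norm_num
  · rw [h.neg_one_zpow]; norm_num

lemma sum4 {t : ℝ} (ht : 0 < t) :
    Summable (fun n : ℤ => (-1:ℝ)^n * Real.exp (-Real.pi * t * n^2)) := by
  apply Summable.of_abs
  refine (sum3 ht).congr fun n => ?_
  rw [abs_mul, neg_one_zpow_abs, one_mul, abs_of_pos (Real.exp_pos _)]

/-- Injection onto even-parity pairs. -/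
def g1 : ℤ × ℤ → ℤ × ℤ := fun p => (p.1 + p.2, p.1 - p.2)
/-- Injection onto odd-parity pairs. -/
def g2 : ℤ × ℤ → ℤ × ℤ := fun p => (p.1 + p.2 + 1, p.1 - p.2)

lemma g1_inj : Function.Injective g1 := by
  rintro ⟨u,v⟩ ⟨u',v'⟩ h
  simp only [g1, Prod.ext_iff] at h ⊢
  omega

lemma g2_inj : Function.Injective g2 := by
  rintro ⟨u,v⟩ ⟨u',v'⟩ h
  simp only [g2, Prod.ext_iff] at h ⊢
  omega

lemma range_g2 : Set.range g2 = (Set.range g1)ᶜ := by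
  ext ⟨a,b⟩
  simp only [Set.mem_range, Set.mem_compl_iff, g1, g2, Prod.ext_iff, Prod.exists]
  constructor
  · rintro ⟨u, v, h1, h2⟩ ⟨u', v', h3, h4⟩
    omega
  · intro h
    by_cases hp : (a + b) % 2 = 0
    · exact absurd ⟨(a+b)/2, (a-b)/2, by omega, by omega⟩ h
    · exact ⟨(a+b-1)/2, (a-b-1)/2, by omega, by omega⟩

lemma split_sum {F : ℤ × ℤ → ℝ} {A B : ℝ} (hA : HasSum (F ∘ g1) A) (hB : HasSum (F ∘ g2) B) :
    HasSum F (A + B) := by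
  have h1 : HasSum (fun x : Set.range g1 => F x) A := g1_inj.hasSum_range_iff.mpr hA
  have h2 : HasSum (fun x : Set.range g2 => F x) B := g2_inj.hasSum_range_iff.mpr hB
  have hc : IsCompl (Set.range g1) (Set.range g2) := by rw [range_g2]; exact isCompl_compl
  exact h1.add_isCompl hc h2

lemma hasSum_prod {f g : ℤ → ℝ} {A B : ℝ} (hf : HasSum f A) (hg : HasSum g B)
    (hfa : Summable fun n => |f n|) (hga : Summable fun n => |g n|) :
    HasSum (fun p : ℤ × ℤ => f p.1 * g p.2) (A * B) :=
  hf.mul hg (summable_mul_of_summable_norm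
    (by simpa [Real.norm_eq_abs] using hfa) (by simpa [Real.norm_eq_abs] using hga))

lemma habs3 {t : ℝ} (ht : 0 < t) : Summable (fun n : ℤ => |Real.exp (-Real.pi * t * n^2)|) :=
  summable_abs_iff.mpr (sum3 ht)
lemma habs2 {t : ℝ} (ht : 0 < t) :
    Summable (fun n : ℤ => |Real.exp (-Real.pi * t * (n+1/2)^2)|) :=
  summable_abs_iff.mpr (sum2 ht)
lemma habs4 {t : ℝ} (ht : 0 < t) :
    Summable (fun n : ℤ => |(-1:ℝ)^n * Real.exp (-Real.pi * t * n^2)|) :=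
  summable_abs_iff.mpr (sum4 ht)

lemma hs3 {t : ℝ} (ht : 0 < t) :
    HasSum (fun n : ℤ => Real.exp (-Real.pi * t * n^2)) (theta3 t) := by
  rw [theta3]; exact (sum3 ht).hasSum
lemma hs2 {t : ℝ} (ht : 0 < t) :
    HasSum (fun n : ℤ => Real.exp (-Real.pi * t * (n+1/2)^2)) (theta2 t) := by
  rw [theta2]; exact (sum2 ht).hasSum
lemma hs4 {t : ℝ} (ht : 0 < t) :
    HasSum (fun n : ℤ => (-1:ℝ)^n * Real.exp (-Real.pi * t * n^2)) (theta4 t) := by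
  rw [theta4]; exact (sum4 ht).hasSum

lemma d1 {y : ℝ} (hy : 0 < y) : theta3 y ^ 2 = theta3 (2*y) ^ 2 + theta2 (2*y) ^ 2 := by
  have hy2 : 0 < 2*y := by linarith
  have hfull : HasSum (fun p : ℤ × ℤ =>
      Real.exp (-Real.pi * y * (p.1:ℝ)^2) * Real.exp (-Real.pi * y * (p.2:ℝ)^2))
      (theta3 y * theta3 y) := hasSum_prod (hs3 hy) (hs3 hy) (habs3 hy) (habs3 hy)
  have hA : HasSum ((fun p : ℤ × ℤ =>
      Real.exp (-Real.pi * y * (p.1:ℝ)^2) * Real.exp (-Real.pi * y * (p.2:ℝ)^2)) ∘ g1)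
      (theta3 (2*y) * theta3 (2*y)) := by
    refine (hasSum_prod (hs3 hy2) (hs3 hy2) (habs3 hy2) (habs3 hy2)).congr_fun fun p => ?_
    obtain ⟨u, v⟩ := p
    simp only [Function.comp, g1]
    rw [← Real.exp_add, ← Real.exp_add]
    congr 1
    push_cast
    ring
  have hB : HasSum ((fun p : ℤ × ℤ =>
      Real.exp (-Real.pi * y * (p.1:ℝ)^2) * Real.exp (-Real.pi * y * (p.2:ℝ)^2)) ∘ g2)
      (theta2 (2*y) * theta2 (2*y)) := by
    refine (hasSum_prod (hs2 hy2) (hs2 hy2) (habs2 hy2) (habs2 hy2)).congr_fun fun p => ?_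
    obtain ⟨u, v⟩ := p
    simp only [Function.comp, g2]
    rw [← Real.exp_add, ← Real.exp_add]
    congr 1
    push_cast
    ring
  have huniq := (split_sum hA hB).unique hfull
  rw [pow_two, pow_two, pow_two]
  linarith

lemma d2 {y : ℝ} (hy : 0 < y) : theta4 y ^ 2 = theta3 (2*y) ^ 2 - theta2 (2*y) ^ 2 := by
  have hy2 : 0 < 2*y := by linarith
  have hfull : HasSum (fun p : ℤ × ℤ =>
      ((-1:ℝ)^p.1 * Real.exp (-Real.pi * y * (p.1:ℝ)^2)) *
      ((-1:ℝ)^p.2 * Real.exp (-Real.pi * y * (p.2:ℝ)^2)))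
      (theta4 y * theta4 y) := hasSum_prod (hs4 hy) (hs4 hy) (habs4 hy) (habs4 hy)
  have hA : HasSum ((fun p : ℤ × ℤ =>
      ((-1:ℝ)^p.1 * Real.exp (-Real.pi * y * (p.1:ℝ)^2)) *
      ((-1:ℝ)^p.2 * Real.exp (-Real.pi * y * (p.2:ℝ)^2))) ∘ g1)
      (theta3 (2*y) * theta3 (2*y)) := by
    refine (hasSum_prod (hs3 hy2) (hs3 hy2) (habs3 hy2) (habs3 hy2)).congr_fun fun p => ?_
    obtain ⟨u, v⟩ := p
    simp only [Function.comp, g1]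
    have hsign : ((-1:ℝ))^(u+v) * ((-1:ℝ))^(u-v) = 1 := by
      rw [← zpow_add₀ (by norm_num : (-1:ℝ) ≠ 0)]
      exact Even.neg_one_zpow ⟨u, by ring⟩
    rw [mul_mul_mul_comm, hsign, one_mul, ← Real.exp_add, ← Real.exp_add]
    congr 1
    push_cast
    ring
  have hB : HasSum ((fun p : ℤ × ℤ =>
      ((-1:ℝ)^p.1 * Real.exp (-Real.pi * y * (p.1:ℝ)^2)) *
      ((-1:ℝ)^p.2 * Real.exp (-Real.pi * y * (p.2:ℝ)^2))) ∘ g2)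
      (-(theta2 (2*y) * theta2 (2*y))) := by
    refine ((hasSum_prod (hs2 hy2) (hs2 hy2) (habs2 hy2) (habs2 hy2)).neg).congr_fun fun p => ?_
    obtain ⟨u, v⟩ := p
    simp only [Function.comp, g2]
    have hsign : ((-1:ℝ))^(u+v+1) * ((-1:ℝ))^(u-v) = -1 := by
      rw [← zpow_add₀ (by norm_num : (-1:ℝ) ≠ 0)]
      exact Odd.neg_one_zpow ⟨u, by ring⟩
    rw [mul_mul_mul_comm, hsign, neg_one_mul, ← Real.exp_add, ← Real.exp_add, neg_inj]
    congr 1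
    push_cast
    ring
  have huniq := (split_sum hA hB).unique hfull
  rw [pow_two, pow_two, pow_two]
  linarith

lemma d3 {y : ℝ} (hy : 0 < y) : theta2 y ^ 2 = 2 * theta2 (2*y) * theta3 (2*y) := by
  have hy2 : 0 < 2*y := by linarith
  have hfull : HasSum (fun p : ℤ × ℤ =>
      Real.exp (-Real.pi * y * ((p.1:ℝ)+1/2)^2) * Real.exp (-Real.pi * y * ((p.2:ℝ)+1/2)^2))
      (theta2 y * theta2 y) := hasSum_prod (hs2 hy) (hs2 hy) (habs2 hy) (habs2 hy)
  have hA : HasSum ((fun p : ℤ × ℤ =>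
      Real.exp (-Real.pi * y * ((p.1:ℝ)+1/2)^2) * Real.exp (-Real.pi * y * ((p.2:ℝ)+1/2)^2)) ∘ g1)
      (theta2 (2*y) * theta3 (2*y)) := by
    refine (hasSum_prod (hs2 hy2) (hs3 hy2) (habs2 hy2) (habs3 hy2)).congr_fun fun p => ?_
    obtain ⟨u, v⟩ := p
    simp only [Function.comp, g1]
    rw [← Real.exp_add, ← Real.exp_add]
    congr 1
    push_cast
    ring
  have hshift : HasSum (fun n : ℤ => Real.exp (-Real.pi * (2*y) * ((n:ℝ)+1)^2))
      (theta3 (2*y)) := by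
    have h := (Equiv.addRight (1:ℤ)).hasSum_iff.mpr (hs3 hy2)
    refine h.congr_fun fun n => ?_
    simp only [Function.comp, Equiv.coe_addRight]
    congr 1
    push_cast
    ring
  have habs_shift : Summable (fun n : ℤ => |Real.exp (-Real.pi * (2*y) * ((n:ℝ)+1)^2)|) :=
    summable_abs_iff.mpr hshift.summable
  have hB : HasSum ((fun p : ℤ × ℤ =>
      Real.exp (-Real.pi * y * ((p.1:ℝ)+1/2)^2) * Real.exp (-Real.pi * y * ((p.2:ℝ)+1/2)^2)) ∘ g2)
      (theta3 (2*y) * theta2 (2*y)) := by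
    refine (hasSum_prod hshift (hs2 hy2) habs_shift (habs2 hy2)).congr_fun fun p => ?_
    obtain ⟨u, v⟩ := p
    simp only [Function.comp, g2]
    rw [← Real.exp_add, ← Real.exp_add]
    congr 1
    push_cast
    ring
  have huniq := (split_sum hA hB).unique hfull
  rw [pow_two]
  nlinarith [huniq]

lemma jacobi {y : ℝ} (hy : 0 < y) : theta2 y ^ 4 + theta4 y ^ 4 = theta3 y ^ 4 := by
  have h1 := d1 hy
  have h2 := d2 hy
  have h3 := d3 hy
  have e2 : theta2 y ^ 4 = (2 * theta2 (2*y) * theta3 (2*y))^2 := by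
    rw [show (4:ℕ) = 2*2 from rfl, pow_mul, h3]
  have e4 : theta4 y ^ 4 = (theta3 (2*y)^2 - theta2 (2*y)^2)^2 := by
    rw [show (4:ℕ) = 2*2 from rfl, pow_mul, h2]
  have e3 : theta3 y ^ 4 = (theta3 (2*y)^2 + theta2 (2*y)^2)^2 := by
    rw [show (4:ℕ) = 2*2 from rfl, pow_mul, h1]
  rw [e2, e4, e3]
  ring

lemma theta3_pos {t : ℝ} (ht : 0 < t) : 0 < theta3 t := by
  rw [theta3]
  exact Summable.tsum_pos (sum3 ht) (fun n => (Real.exp_pos _).le) 0 (Real.exp_pos _)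

lemma zfun_nonneg (y : ℝ) : 0 ≤ zfun y := by
  rw [zfun]
  positivity

lemma zfun_le {y : ℝ} (hy : 0 < y) : zfun y ≤ 1/4 := by
  have hj := jacobi hy
  have h3 := theta3_pos hy
  rw [zfun, div_le_iff₀ (by positivity)]
  nlinarith [sq_nonneg (theta2 y ^ 4 - theta4 y ^ 4), sq_nonneg (theta3 y ^ 2)]

lemma theta4_one_complex : (theta4 1 : ℂ) = jacobiTheta₂ (1/2) I := by
  rw [theta4, jacobiTheta₂, Complex.ofReal_tsum]
  refine tsum_congr fun n => ?_
  rw [jacobiTheta₂_term]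
  have h1 : 2 * ↑π * I * (n:ℂ) * (1/2) + ↑π * I * (n:ℂ)^2 * I
      = (n:ℂ) * (↑π * I) + ((-Real.pi * 1 * (n:ℝ)^2 : ℝ) : ℂ) := by
    push_cast
    ring_nf
    rw [Complex.I_sq]
    ring
  rw [h1, Complex.exp_add, Complex.exp_int_mul, Complex.exp_pi_mul_I]
  push_cast [Complex.ofReal_exp, Complex.ofReal_zpow]
  ring

lemma theta2_one_complex : (theta2 1 : ℂ) = (Real.exp (-π/4) : ℝ) * jacobiTheta₂ (I/2) I := by
  rw [theta2, jacobiTheta₂, Complex.ofReal_tsum, ← tsum_mul_left]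
  refine tsum_congr fun n => ?_
  rw [jacobiTheta₂_term, Complex.ofReal_exp, Complex.ofReal_exp, ← Complex.exp_add]
  congr 1
  push_cast
  ring_nf
  rw [Complex.I_sq]
  ring

lemma theta2_eq_theta4_one : theta2 1 = theta4 1 := by
  have key := jacobiTheta₂_functional_equation (1/2) I
  have h2 : ((1:ℂ)/(-I * I) ^ ((1:ℂ)/2)) = 1 := by
    rw [show (-I * I : ℂ) = 1 by simp [Complex.I_mul_I], Complex.one_cpow]
    norm_num
  have h3 : (-(↑π) * I * (1/2:ℂ)^2 / I) = ((-π/4 : ℝ) : ℂ) := by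
    field_simp
    push_cast
    ring
  have h4 : ((1/2:ℂ)/I) = -(I/2) := by
    field_simp [Complex.I_ne_zero]
    linear_combination (1:ℂ) * Complex.I_mul_I
  have h5 : (-1/I : ℂ) = I := by
    field_simp [Complex.I_ne_zero]
    rw [Complex.I_sq]
  rw [h2, h3, h4, h5, one_mul, jacobiTheta₂_neg_left, ← Complex.ofReal_exp] at key
  have heq : (theta4 1 : ℂ) = (theta2 1 : ℂ) := by
    rw [theta4_one_complex, theta2_one_complex, key]
  exact_mod_cast heq.symm

lemma zfun_one : zfun 1 = 1/4 := by
  have hj := jacobi one_pos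
  rw [theta2_eq_theta4_one] at hj
  have h3 := theta3_pos one_pos
  rw [zfun, theta2_eq_theta4_one, div_eq_iff (by positivity)]
  linear_combination ((theta3 1^4 + 2 * theta4 1^4)/4) * hj

lemma P80ineq {z : ℝ} (h0 : 0 ≤ z) (h1 : z ≤ 1/4) : P80 (1/4) ≤ P80 z := by
  unfold P80
  nlinarith [mul_nonneg h0 h0, sq_nonneg z, sq_nonneg (1/4-z), mul_nonneg (mul_nonneg h0 h0) h0,
    pow_nonneg h0 3, pow_nonneg h0 4, pow_nonneg h0 5, pow_nonneg h0 6,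
    mul_nonneg (pow_nonneg h0 6) (sub_nonneg.2 h1),
    mul_nonneg (pow_nonneg h0 7) (sub_nonneg.2 h1),
    mul_nonneg (pow_nonneg h0 8) (sub_nonneg.2 h1),
    mul_nonneg (mul_nonneg (pow_nonneg h0 6) (sub_nonneg.2 h1)) (sub_nonneg.2 h1),
    mul_nonneg (mul_nonneg (pow_nonneg h0 4) (sub_nonneg.2 h1)) (sub_nonneg.2 h1),
    sq_nonneg (z*(1/4-z)), pow_nonneg (sub_nonneg.2 h1) 2]

lemma P80_quarter_pos : 0 < P80 (1/4) := by
  unfold P80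
  norm_num

end SecrecyAux

theorem secrecy_dim80 :
    (∀ y : ℝ, 0 < y → P80 (1 / 4) ≤ P80 (zfun y)) ∧ 0 < P80 (1 / 4) ∧
      (∀ y : ℝ, 0 < y → (P80 (zfun y))⁻¹ ≤ (P80 (zfun 1))⁻¹) ∧
      (P80 (zfun 1))⁻¹ = (P80 (1 / 4))⁻¹ := by
  have hmain : ∀ y : ℝ, 0 < y → P80 (1 / 4) ≤ P80 (zfun y) := fun y hy =>
    SecrecyAux.P80ineq (SecrecyAux.zfun_nonneg y) (SecrecyAux.zfun_le hy)
  refine ⟨hmain, SecrecyAux.P80_quarter_pos, fun y hy => ?_, by rw [SecrecyAux.zfun_one]⟩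
  rw [SecrecyAux.zfun_one]
  exact inv_anti₀ SecrecyAux.P80_quarter_pos (hmain y hy)
end
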